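/- Let T be a positive integer and let X_1, …, X_T be i.i.d. real-valued random variables with common cumulative distribution function F. Let V : ℝ → ℝ be Borel measurable, nonnegative, and monotone nondecreasing. Let S_1 ∈ (0, T] be a real number and let l ∈ ℝ satisfy F(l) = 1 − S_1/T. Then (1 − e^{−S_1})·V(l) ≤ E[V(max_{1 ≤ t ≤ T} X_t)]. -/

import Mathlib

open MeasureTheory ProbabilityTheory Real

/-- For `T` i.i.d. real random variables `X 0, …, X (T-1)` with common
cdf `F`, a Borel measurable, nonnegative, nondecreasing `V : ℝ → ℝ`, `S₁ ∈ (0, T]`, and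
`l` with `F l = 1 - S₁/T`, one has
`(1 - e^{-S₁}) · V l ≤ E[V (max_t X_t)]` (expectation as a Lebesgue integral in `[0,∞]`). -/
theorem stmt0
    {Ω : Type*} [MeasurableSpace Ω] (P : Measure Ω) [IsProbabilityMeasure P]
    (T : ℕ) (hT : 0 < T)
    (X : Fin T → Ω → ℝ)
    (hmeas : ∀ t, Measurable (X t))
    (hindep : iIndepFun X P)
    (hident : ∀ t, Measure.map (X t) P = Measure.map (X ⟨0, hT⟩) P)
    (F : ℝ → ℝ) (hF : ∀ x, F x = (P {ω | X ⟨0, hT⟩ ω ≤ x}).toReal)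
    (V : ℝ → ℝ) (hVmeas : Measurable V) (hVnonneg : ∀ x, 0 ≤ V x) (hVmono : Monotone V)
    (S₁ : ℝ) (hS₁pos : 0 < S₁) (hS₁le : S₁ ≤ T)
    (l : ℝ) (hl : F l = 1 - S₁ / T) :
    ENNReal.ofReal ((1 - Real.exp (-S₁)) * V l)
      ≤ ∫⁻ ω, ENNReal.ofReal
          (V (Finset.univ.sup' ⟨⟨0, hT⟩, Finset.mem_univ _⟩ (fun t => X t ω))) ∂P := by
  have ne : (Finset.univ : Finset (Fin T)).Nonempty := ⟨⟨0, hT⟩, Finset.mem_univ _⟩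
  set M : Ω → ℝ := fun ω => Finset.univ.sup' ne (fun t => X t ω) with hM
  have hMmeas : Measurable M := by
    have h := Finset.measurable_sup' ne (fun (t : Fin T) _ => hmeas t)
    have : M = Finset.univ.sup' ne X := by
      funext ω; rw [hM, Finset.sup'_apply]
    rw [this]; exact h
  show ENNReal.ofReal ((1 - Real.exp (-S₁)) * V l) ≤ ∫⁻ ω, ENNReal.ofReal (V (M ω)) ∂P
  -- P {M ≤ l} = (F l)^T
  have hFl0 : (0:ℝ) ≤ F l := by
    rw [hl]; have : S₁ / T ≤ 1 := by
      rw [div_le_one (by exact_mod_cast hT)]; exact hS₁le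
    linarith
  have hPt : ∀ t : Fin T, P {ω | X t ω ≤ l} = ENNReal.ofReal (F l) := by
    intro t
    have h1 : P {ω | X t ω ≤ l} = (Measure.map (X t) P) (Set.Iic l) := by
      rw [Measure.map_apply (hmeas t) measurableSet_Iic]; rfl
    rw [h1, hident t, Measure.map_apply (hmeas _) measurableSet_Iic]
    have : P (X ⟨0, hT⟩ ⁻¹' Set.Iic l) = P {ω | X ⟨0, hT⟩ ω ≤ l} := rfl
    rw [this, hF l] at *
    rw [ENNReal.ofReal_toReal (measure_ne_top _ _)]
  have hsetle : {ω | M ω ≤ l} = ⋂ t, X t ⁻¹' Set.Iic l := by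
    ext ω; simp [hM, Finset.sup'_le_iff, Set.mem_iInter]
  have hPle : P {ω | M ω ≤ l} = (ENNReal.ofReal (F l)) ^ T := by
    rw [hsetle, hindep.meas_iInter (fun t => ⟨Set.Iic l, measurableSet_Iic, rfl⟩)]
    have : ∀ t : Fin T, P (X t ⁻¹' Set.Iic l) = ENNReal.ofReal (F l) := fun t => hPt t
    simp only [this, Finset.prod_const, Finset.card_univ, Fintype.card_fin]
  -- (F l)^T ≤ exp(-S₁)
  have hexp : (F l) ^ T ≤ Real.exp (-S₁) := by
    have h1 : F l ≤ Real.exp (-(S₁ / T)) := by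
      rw [hl]; linarith [Real.add_one_le_exp (-(S₁/T))]
    calc (F l)^T ≤ (Real.exp (-(S₁/T)))^T := pow_le_pow_left₀ hFl0 h1 T
      _ = Real.exp (-S₁) := by
          rw [← Real.exp_nat_mul]
          congr 1
          have hT' : (T:ℝ) ≠ 0 := by exact_mod_cast hT.ne'
          field_simp
  -- lower bound P {l ≤ M}
  have hA : MeasurableSet {ω | l ≤ M ω} := measurableSet_le measurable_const hMmeas
  have hPA : 1 - ENNReal.ofReal (Real.exp (-S₁)) ≤ P {ω | l ≤ M ω} := by
    have hc : P {ω | l ≤ M ω}ᶜ ≤ ENNReal.ofReal (Real.exp (-S₁)) := by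
      have hsub : {ω | l ≤ M ω}ᶜ ⊆ {ω | M ω ≤ l} := by
        intro ω h
        simp only [Set.mem_compl_iff, Set.mem_setOf_eq, not_le] at h
        exact h.le
      calc P {ω | l ≤ M ω}ᶜ ≤ P {ω | M ω ≤ l} := measure_mono hsub
        _ = ENNReal.ofReal ((F l)^T) := by rw [hPle, ENNReal.ofReal_pow hFl0]
        _ ≤ ENNReal.ofReal (Real.exp (-S₁)) := ENNReal.ofReal_le_ofReal hexp
    have := measure_compl hA (measure_ne_top P _)
    rw [measure_univ] at this
    have h2 : P {ω | l ≤ M ω} = 1 - P {ω | l ≤ M ω}ᶜ := by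
      rw [this, ENNReal.sub_sub_cancel ENNReal.one_ne_top (measure_mono (Set.subset_univ _) |>.trans_eq (measure_univ))]
    rw [h2]
    exact tsub_le_tsub_left hc 1
  -- integral lower bound
  have hint : ENNReal.ofReal (V l) * P {ω | l ≤ M ω}
      ≤ ∫⁻ ω, ENNReal.ofReal (V (M ω)) ∂P := by
    calc ENNReal.ofReal (V l) * P {ω | l ≤ M ω}
        = ∫⁻ ω in {ω | l ≤ M ω}, ENNReal.ofReal (V l) ∂P := by
          rw [setLIntegral_const]
      _ ≤ ∫⁻ ω in {ω | l ≤ M ω}, ENNReal.ofReal (V (M ω)) ∂P := by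
          refine setLIntegral_mono (hVmeas.comp hMmeas).ennreal_ofReal (fun ω hω => ?_)
          exact ENNReal.ofReal_le_ofReal (hVmono hω)
      _ ≤ ∫⁻ ω, ENNReal.ofReal (V (M ω)) ∂P := setLIntegral_le_lintegral _ _
  refine le_trans ?_ hint
  have hexple : Real.exp (-S₁) ≤ 1 := Real.exp_le_one_iff.mpr (by linarith)
  rw [ENNReal.ofReal_mul (by linarith), ENNReal.ofReal_sub _ (Real.exp_pos _).le,
    ENNReal.ofReal_one]
  rw [mul_comm]
  exact mul_le_mul_right hPA _
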